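/- Every simple MV-algebra is isomorphic to a subalgebra of [0,1]; that is, if A is an MV-algebra that is simple, then there exists an injective map f from A into the real unit interval [0,1] such that f 0 = 0, f (¬x) = 1 − f x, and f (x ⊕ y) = min 1 (f x + f y) for all x, y ∈ A. -/

import Mathlib

universe u v

/-- An MV-algebra: operations ⊕, ¬, 0 satisfying MV1–MV6. -/
structure MVAlgebra (A : Type u) where
  oplus : A → A → A
  neg : A → A
  zero : A
  mv1 : ∀ x y z, oplus (oplus x y) z = oplus x (oplus y z)
  mv2 : ∀ x y, oplus x y = oplus y x
  mv3 : ∀ x, oplus x zero = x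
  mv4 : ∀ x, neg (neg x) = x
  mv5 : ∀ x, oplus x (neg zero) = neg zero
  mv6 : ∀ x y, oplus (neg (oplus (neg x) y)) y = oplus (neg (oplus x (neg y))) x

/-- A congruence of an MV-algebra: an equivalence relation compatible with ⊕ and ¬. -/
def IsMVCongruence {A : Type u} (M : MVAlgebra A) (θ : A → A → Prop) : Prop :=
  Equivalence θ ∧ (∀ a b c d, θ a b → θ c d → θ (M.oplus a c) (M.oplus b d)) ∧
    ∀ a b, θ a b → θ (M.neg a) (M.neg b)

/-- A simple MV-algebra: it has exactly two congruences, equality and the all relation. -/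
def IsSimpleMV {A : Type u} (M : MVAlgebra A) : Prop :=
  (fun a b : A => a = b) ≠ (fun _ _ => True) ∧
    ∀ θ, IsMVCongruence M θ → θ = (fun a b : A => a = b) ∨ θ = fun _ _ => True

namespace MVW

variable {A : Type u}

/-- carrier synonym -/
def W (_M : MVAlgebra A) : Type u := A

variable {M : MVAlgebra A}

/-- cast from `A` to the synonym -/
def toW (M : MVAlgebra A) (x : A) : W M := x

instance : Add (W M) := ⟨M.oplus⟩
instance : Neg (W M) := ⟨M.neg⟩
instance : Zero (W M) := ⟨M.zero⟩
instance : One (W M) := ⟨M.neg M.zero⟩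
instance : Mul (W M) := ⟨fun x y => -(-x + -y)⟩
instance : Sub (W M) := ⟨fun x y => x * -y⟩
instance : LE (W M) := ⟨fun x y => -x + y = 1⟩

lemma add_assoc' (x y z : W M) : x + y + z = x + (y + z) := M.mv1 x y z
lemma add_comm' (x y : W M) : x + y = y + x := M.mv2 x y
lemma add_zero' (x : W M) : x + 0 = x := M.mv3 x
lemma zero_add' (x : W M) : 0 + x = x := by rw [add_comm']; exact M.mv3 x
lemma neg_neg' (x : W M) : -(-x) = x := M.mv4 x
lemma add_one' (x : W M) : x + 1 = 1 := M.mv5 x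
lemma one_add' (x : W M) : 1 + x = 1 := by rw [add_comm']; exact M.mv5 x
lemma mv6' (x y : W M) : -(-x + y) + y = -(x + -y) + x := M.mv6 x y
lemma neg_zero' : -(0 : W M) = 1 := rfl
lemma neg_one' : -(1 : W M) = 0 := M.mv4 M.zero
lemma neg_inj' {x y : W M} (h : -x = -y) : x = y := by
  rw [← neg_neg' x, h, neg_neg']
lemma add_neg_self' (x : W M) : x + -x = 1 := by
  have h := mv6' (1 : W M) x
  rw [neg_one', zero_add', one_add', neg_one', zero_add'] at h
  rw [add_comm']; exact h.trans rfl
lemma neg_add_self' (x : W M) : -x + x = 1 := by rw [add_comm']; exact add_neg_self' x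

lemma mul_def (x y : W M) : x * y = -(-x + -y) := rfl
lemma sub_def (x y : W M) : x - y = x * -y := rfl
lemma sub_def' (x y : W M) : x - y = -(-x + y) := by rw [sub_def, mul_def, neg_neg']
lemma neg_mul_neg (x y : W M) : -x * -y = -(x + y) := by rw [mul_def, neg_neg', neg_neg']
lemma neg_add (x y : W M) : -(x + y) = -x * -y := (neg_mul_neg x y).symm
lemma neg_mul (x y : W M) : -(x * y) = -x + -y := by rw [mul_def, neg_neg']
lemma mul_comm' (x y : W M) : x * y = y * x := by rw [mul_def, mul_def, add_comm']
lemma mul_assoc' (x y z : W M) : x * y * z = x * (y * z) := by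
  rw [mul_def, mul_def, mul_def, mul_def, neg_neg', neg_neg', add_assoc']
lemma mul_one' (x : W M) : x * 1 = x := by rw [mul_def, neg_one', add_zero', neg_neg']
lemma one_mul' (x : W M) : 1 * x = x := by rw [mul_comm']; exact mul_one' x
lemma mul_zero' (x : W M) : x * 0 = 0 := by rw [mul_def, neg_zero', add_one', neg_one']
lemma mul_neg_self' (x : W M) : x * -x = 0 := by
  rw [mul_def, neg_neg', neg_add_self', neg_one']

lemma le_def (x y : W M) : x ≤ y ↔ -x + y = 1 := Iff.rfl
lemma le_refl' (x : W M) : x ≤ x := neg_add_self' x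
lemma le_top' (x : W M) : x ≤ 1 := add_one' (-x)
lemma bot_le' (x : W M) : (0 : W M) ≤ x := by
  show -(0:W M) + x = 1; rw [neg_zero', one_add']
lemma le_antisymm' {x y : W M} (h1 : x ≤ y) (h2 : y ≤ x) : x = y := by
  have h := mv6' y x
  rw [le_def] at h1 h2
  rw [h2, add_comm' y (-x), h1, neg_one', zero_add', zero_add'] at h
  exact h
lemma sub_add_cancel_of_le {x y : W M} (h : x ≤ y) : (y - x) + x = y := by
  have h6 := mv6' y x
  rw [le_def] at h
  rw [add_comm' y (-x), h, neg_one', zero_add'] at h6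
  rw [sub_def']
  exact h6
lemma le_iff_exists_add {x y : W M} : x ≤ y ↔ ∃ z, x + z = y := by
  constructor
  · intro h; exact ⟨y - x, by rw [add_comm']; exact sub_add_cancel_of_le h⟩
  · rintro ⟨z, rfl⟩
    show -x + (x + z) = 1
    rw [← add_assoc', neg_add_self', one_add']
lemma le_trans' {x y z : W M} (h1 : x ≤ y) (h2 : y ≤ z) : x ≤ z := by
  rw [le_iff_exists_add] at *
  obtain ⟨u, rfl⟩ := h1; obtain ⟨v, rfl⟩ := h2
  exact ⟨u + v, (add_assoc' x u v).symm⟩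
lemma le_add_right (x y : W M) : x ≤ x + y := le_iff_exists_add.2 ⟨y, rfl⟩
lemma le_add_left (x y : W M) : x ≤ y + x := by rw [add_comm']; exact le_add_right x y
lemma add_le_add_right' {x y : W M} (h : x ≤ y) (z : W M) : x + z ≤ y + z := by
  rw [le_iff_exists_add] at *
  obtain ⟨u, rfl⟩ := h
  exact ⟨u, by rw [add_assoc', add_assoc', add_comm' z u]⟩
lemma add_le_add_left' {x y : W M} (h : x ≤ y) (z : W M) : z + x ≤ z + y := by
  rw [add_comm' z x, add_comm' z y]; exact add_le_add_right' h z
lemma add_le_add' {a b c d : W M} (h1 : a ≤ b) (h2 : c ≤ d) : a + c ≤ b + d :=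
  le_trans' (add_le_add_right' h1 c) (add_le_add_left' h2 b)
lemma neg_le_neg' {x y : W M} (h : x ≤ y) : -y ≤ -x := by
  show -(-y) + -x = 1
  rw [neg_neg', add_comm']; exact h
lemma mul_le_mul_right' {x y : W M} (h : x ≤ y) (z : W M) : x * z ≤ y * z := by
  rw [mul_def, mul_def]
  exact neg_le_neg' (add_le_add_right' (neg_le_neg' h) _)
lemma mul_le_mul_left' {x y : W M} (h : x ≤ y) (z : W M) : z * x ≤ z * y := by
  rw [mul_comm' z x, mul_comm' z y]; exact mul_le_mul_right' h z
lemma mul_le_left (x y : W M) : x * y ≤ x := by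
  have := mul_le_mul_left' (le_top' y) x
  rwa [mul_one'] at this
lemma mul_le_right (x y : W M) : x * y ≤ y := by rw [mul_comm']; exact mul_le_left y x
lemma sub_le_self' (x y : W M) : x - y ≤ x := mul_le_left x (-y)
lemma sub_eq_zero_of_le {x y : W M} (h : x ≤ y) : x - y = 0 := by
  rw [sub_def']; rw [le_def] at h; rw [h, neg_one']
lemma le_of_sub_eq_zero {x y : W M} (h : x - y = 0) : x ≤ y := by
  rw [sub_def'] at h
  rw [le_def, ← neg_neg' (-x + y), h, neg_zero']
lemma sub_zero' (x : W M) : x - 0 = x := by rw [sub_def, neg_zero', mul_one']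
lemma zero_sub' (x : W M) : 0 - x = 0 := by rw [sub_def, mul_comm', mul_zero']
lemma eq_one_of_one_le {x : W M} (h : (1 : W M) ≤ x) : x = 1 := le_antisymm' (le_top' x) h
lemma mul_eq_one_iff {x y : W M} : x * y = 1 ↔ x = 1 ∧ y = 1 := by
  constructor
  · intro h
    constructor
    · exact eq_one_of_one_le (h ▸ mul_le_left x y)
    · exact eq_one_of_one_le (h ▸ mul_le_right x y)
  · rintro ⟨rfl, rfl⟩; exact mul_one' 1

/-- the I-identity from MV6 -/
lemma I_identity (x y : W M) : y - x * y = (x + y) - x := by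
  have h := mv6' x (-y)
  rw [neg_neg'] at h
  -- h : -(-x + -y) + -y = -(x + y) + x
  rw [sub_def', sub_def', mul_def, add_comm' (-y)]
  exact congrArg (fun t => -t) h
lemma add_sub_self_of_le {u w : W M} (h : u ≤ -w) : (w + u) - w = u := by
  have hI := I_identity w u
  -- u - w * u = (w + u) - w
  have h0 : w * u = 0 := by
    rw [mul_comm']
    have : u - -w = 0 := sub_eq_zero_of_le h
    rwa [sub_def, neg_neg'] at this
  rw [h0, sub_zero'] at hI
  exact hI.symm
lemma canc {a p q : W M} (h : a + p = a + q) (hp : p ≤ -a) (hq : q ≤ -a) : p = q := by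
  have e1 := add_sub_self_of_le hp
  have e2 := add_sub_self_of_le hq
  rw [← e1, ← e2, h]

instance : AddCommMonoid (W M) where
  add_assoc := add_assoc'
  zero_add := zero_add'
  add_zero := add_zero'
  add_comm := add_comm'
  nsmul := nsmulRec

lemma add4a (p q r s : W M) : (p+q)+(r+s) = (p+r)+(q+s) := by abel
lemma add4b (p q r s : W M) : (p+q)+(r+s) = (p+s)+(q+r) := by abel
lemma add3a (p q r : W M) : p + (q + r) = (q + p) + r := by abel

def sup (x y : W M) : W M := (x - y) + y
def inf (x y : W M) : W M := -(sup (-x) (-y))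

lemma sup_comm (x y : W M) : sup x y = sup y x := by
  show (x - y) + y = (y - x) + x
  rw [sub_def', sub_def', add_comm' (-y) x]
  exact mv6' x y
lemma le_sup_right (x y : W M) : y ≤ sup x y := le_add_left y (x - y)
lemma le_sup_left (x y : W M) : x ≤ sup x y := by
  rw [sup_comm]; exact le_sup_right y x
lemma sup_eq_right {x y : W M} (h : x ≤ y) : sup x y = y := by
  show (x - y) + y = y
  rw [sub_eq_zero_of_le h, zero_add']
lemma sup_eq_left {x y : W M} (h : y ≤ x) : sup x y = x := by
  rw [sup_comm]; exact sup_eq_right h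
lemma sup_le {x y z : W M} (h1 : x ≤ z) (h2 : y ≤ z) : sup x y ≤ z := by
  have : sup x y ≤ sup z y := add_le_add_right' (mul_le_mul_right' h1 (-y)) y
  rwa [sup_eq_left h2] at this

lemma inf_le_left (x y : W M) : inf x y ≤ x := by
  have h2 := neg_le_neg' (le_sup_left (-x) (-y))
  rwa [neg_neg'] at h2
lemma inf_le_right (x y : W M) : inf x y ≤ y := by
  have h2 := neg_le_neg' (le_sup_right (-x) (-y))
  rwa [neg_neg'] at h2
lemma le_inf {x y z : W M} (h1 : z ≤ x) (h2 : z ≤ y) : z ≤ inf x y := by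
  have h3 := neg_le_neg' (sup_le (neg_le_neg' h1) (neg_le_neg' h2))
  rwa [neg_neg'] at h3
lemma inf_comm' (x y : W M) : inf x y = inf y x := by
  show -(sup (-x) (-y)) = -(sup (-y) (-x))
  rw [sup_comm]
lemma sup_idem (x : W M) : sup x x = x := sup_eq_right (le_refl' x)
lemma inf_idem (x : W M) : inf x x = x := by
  show -(sup (-x) (-x)) = x
  rw [sup_idem, neg_neg']
lemma eq_zero_of_le_zero {x : W M} (h : x ≤ (0:W M)) : x = 0 :=
  le_antisymm' h (bot_le' x)

/-- H identity: (x*y) + (x+y) = x+y -/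
lemma H_identity (x y : W M) : (x * y) + (x + y) = x + y := by
  have hI : y - (x * y) = (x + y) - x := I_identity x y
  have h1 : (y - (x * y)) + x = x + y := by
    rw [hI]; exact sub_add_cancel_of_le (le_add_right x y)
  have h2 : (y - (x * y)) + (x * y) = y := sub_add_cancel_of_le (mul_le_right x y)
  calc (x*y) + (x + y) = (x*y) + ((y - (x*y)) + x) := by rw [h1]
    _ = ((y - (x*y)) + (x*y)) + x := add3a _ _ _
    _ = y + x := by rw [h2]
    _ = x + y := add_comm' y x

lemma inf_eq_mul_form (x y : W M) : inf x y = y * (x + -y) := by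
  show -(((-x) - (-y)) + (-y)) = y * (x + -y)
  rw [sub_def, neg_neg', mul_def (y) (x + -y), neg_add x (-y), neg_neg']
  rw [add_comm' ((-x) * y) (-y)]

/-- (a-b) ∧ (b-a) = 0 -/
lemma inf_sub_sub (a b : W M) : inf (a - b) (b - a) = 0 := by
  have h := inf_eq_mul_form (a - b) (b - a)
  have hH : (a - b) + -(b - a) = -(b - a) := by
    have hb : -(b - a) = -b + a := by rw [sub_def, neg_mul, neg_neg']
    rw [hb, sub_def, add_comm' (-b) a]
    exact H_identity a (-b)
  rw [hH, mul_neg_self'] at h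
  exact h

lemma add_sub_le (v w : W M) : (v + w) - w ≤ v := by
  show -((v+w) - w) + v = 1
  rw [sub_def', neg_neg', add_assoc', add_comm' w v, neg_add_self' (v + w)]
lemma sub_le_of_le_add {u v w : W M} (h : u ≤ v + w) : u - w ≤ v := by
  exact le_trans' (mul_le_mul_right' h (-w)) (add_sub_le v w)

/-- distributivity inequality: (x+y) ∧ (x+z) ≤ x + (y ∧ z) -/
lemma inf_add_le (x y z : W M) : inf (x + y) (x + z) ≤ x + inf y z := by
  have h1 : inf (x+y) (x+z) - x ≤ y := by
    apply sub_le_of_le_add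
    rw [add_comm' y x]
    exact inf_le_left _ _
  have h2 : inf (x+y) (x+z) - x ≤ z := by
    apply sub_le_of_le_add
    rw [add_comm' z x]
    exact inf_le_right _ _
  have h3 := le_inf h1 h2
  have h4 := le_sup_left (inf (x+y) (x+z)) x
  have h5 := add_le_add_right' h3 x
  rw [add_comm' (inf y z) x] at h5
  exact le_trans' h4 h5

/-- x ∧ (y+z) ≤ (x∧y) + (x∧z) -/
lemma inf_le_add_inf (x y z : W M) : inf x (y + z) ≤ inf x y + inf x z := by
  have h1 : inf x (y+z) - y ≤ z := by
    apply sub_le_of_le_add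
    rw [add_comm' z y]
    exact inf_le_right _ _
  have h1' : inf x (y+z) - y ≤ x := le_trans' (sub_le_self' _ y) (inf_le_left _ _)
  have h2 : inf x (y+z) - y ≤ inf x z := le_inf h1' h1
  have h3 : inf x (y+z) ≤ inf x z + y :=
    le_trans' (le_sup_left _ y) (add_le_add_right' h2 y)
  have h4 : inf x (y+z) ≤ inf x z + x := le_trans' (inf_le_left _ _) (le_add_left x _)
  have h5 := le_inf h3 h4
  have h7 := le_trans' h5 (inf_add_le (inf x z) y x)
  rw [inf_comm' y x, add_comm' (inf x z) (inf x y)] at h7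
  exact h7

/-- n-fold truncated sum -/
def nsm : ℕ → W M → W M
  | 0, _ => 0
  | n+1, x => nsm n x + x

lemma nsm_succ (n : ℕ) (x : W M) : nsm (n+1) x = nsm n x + x := rfl
lemma nsm_add_app (m n : ℕ) (x : W M) : nsm (m + n) x = nsm m x + nsm n x := by
  induction n with
  | zero => exact (add_zero' (nsm m x)).symm
  | succ n ih =>
      show nsm (m + n + 1) x = _
      rw [nsm_succ, ih, nsm_succ, add_assoc']
lemma nsm_le_nsm {m n : ℕ} (h : m ≤ n) (x : W M) : nsm m x ≤ nsm n x := by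
  obtain ⟨k, rfl⟩ := Nat.exists_eq_add_of_le h
  rw [nsm_add_app]
  exact le_add_right _ _
lemma inf_nsm_zero {u v : W M} (h : inf u v = 0) (n : ℕ) : inf (nsm n u) v = 0 := by
  induction n with
  | zero => exact eq_zero_of_le_zero (inf_le_left _ _)
  | succ n ih =>
      apply eq_zero_of_le_zero
      have h1 := inf_le_add_inf v (nsm n u) u
      rw [inf_comm' v (nsm n u), ih, inf_comm' v u, h, add_zero'] at h1
      rw [inf_comm'] at h1
      exact h1
lemma inf_nsm_nsm_zero {u v : W M} (h : inf u v = 0) (n m : ℕ) :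
    inf (nsm n u) (nsm m v) = 0 := by
  have h2 : inf v (nsm n u) = 0 := by rw [inf_comm']; exact inf_nsm_zero h n
  rw [inf_comm']; exact inf_nsm_zero h2 m

/-- distance -/
def dist' (x y : W M) : W M := (x - y) + (y - x)
lemma dist_self (x : W M) : dist' x x = 0 := by
  show (x - x) + (x - x) = 0
  rw [sub_eq_zero_of_le (le_refl' x), add_zero']
lemma dist_comm' (x y : W M) : dist' x y = dist' y x := add_comm' _ _
lemma sub_triangle (x y z : W M) : x - z ≤ (x - y) + (y - z) := by
  apply sub_le_of_le_add
  have h1 : x ≤ (x - y) + y := le_sup_left x y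
  have h2 : (x - y) + y ≤ (x - y) + ((y - z) + z) := add_le_add_left' (le_sup_left y z) _
  have h3 := le_trans' h1 h2
  rwa [← add_assoc'] at h3
lemma dist_triangle' (x y z : W M) : dist' x z ≤ dist' x y + dist' y z := by
  have h := add_le_add' (sub_triangle x y z) (sub_triangle z y x)
  apply le_trans' h
  rw [add4b]; exact le_refl' _
lemma dist_neg_neg (x y : W M) : dist' (-x) (-y) = dist' x y := by
  show (-x - -y) + (-y - -x) = (x - y) + (y - x)
  rw [sub_def, sub_def, neg_neg', neg_neg', mul_comm' (-x) y, mul_comm' (-y) x]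
  exact add_comm' _ _
lemma sub_add_sub_le (x y u v : W M) : (x + u) - (y + v) ≤ (x - y) + (u - v) := by
  apply sub_le_of_le_add
  have h := add_le_add' (show x ≤ (x-y)+y from le_sup_left x y)
    (show u ≤ (u-v)+v from le_sup_left u v)
  apply le_trans' h
  rw [add4a]
  exact le_refl' _
lemma dist_add_le (x y u v : W M) : dist' (x + u) (y + v) ≤ dist' x y + dist' u v := by
  have h := add_le_add' (sub_add_sub_le x y u v) (sub_add_sub_le y x v u)
  apply le_trans' h
  rw [add4a]; exact le_refl' _

lemma le_of_eq' {x y : W M} (h : x = y) : x ≤ y := h ▸ le_refl' x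
lemma dist_zero_right (x : W M) : dist' x 0 = x := by
  show (x - 0) + (0 - x) = x
  rw [sub_zero', zero_sub', add_zero']
lemma nsm_one (x : W M) : nsm 1 x = x := zero_add' x

def theta (a : W M) : A → A → Prop := fun x y => ∃ n, dist' (toW M x) (toW M y) ≤ nsm n a

lemma theta_congruence (a : W M) : IsMVCongruence M (theta a) := by
  refine ⟨⟨?_, ?_, ?_⟩, ?_, ?_⟩
  · intro x
    exact ⟨0, by rw [dist_self]; exact le_refl' _⟩
  · rintro x y ⟨n, hn⟩
    exact ⟨n, by rw [dist_comm']; exact hn⟩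
  · rintro x y z ⟨n, hn⟩ ⟨m, hm⟩
    refine ⟨n + m, le_trans' (dist_triangle' x y z) ?_⟩
    exact le_trans' (add_le_add' hn hm) (le_of_eq' (nsm_add_app n m a).symm)
  · rintro x y u v ⟨n, hn⟩ ⟨m, hm⟩
    refine ⟨n + m, ?_⟩
    show dist' (toW M x + toW M u) (toW M y + toW M v) ≤ nsm (n + m) a
    exact le_trans' (dist_add_le x y u v)
      (le_trans' (add_le_add' hn hm) (le_of_eq' (nsm_add_app n m a).symm))
  · rintro x y ⟨n, hn⟩
    refine ⟨n, ?_⟩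
    show dist' (-(toW M x)) (-(toW M y)) ≤ nsm n a
    rw [dist_neg_neg]; exact hn

section Simple
variable (hs : IsSimpleMV M)
include hs

lemma nontriv : (0 : W M) ≠ 1 := by
  intro h0
  apply hs.1
  have hall : ∀ x : W M, x = 1 := fun x => by
    rw [← add_zero' x, h0, add_one']
  funext a b
  simp only [eq_iff_iff, iff_true]
  exact (hall a).trans (hall b).symm

lemma arch {x : W M} (hx : x ≠ (0 : W M)) : ∃ n, nsm n x = (1 : W M) := by
  rcases hs.2 (theta x) (theta_congruence x) with hEq | hEq
  · exfalso
    have hx0 : theta x x (M.zero) := ⟨1, by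
      show dist' x (0 : W M) ≤ nsm 1 x
      rw [dist_zero_right, nsm_one]; exact le_refl' x⟩
    rw [hEq] at hx0
    exact hx hx0
  · have : theta x (M.neg M.zero) (M.zero) := by rw [hEq]; trivial
    obtain ⟨n, hn⟩ := this
    have hd : dist' (toW M (M.neg M.zero)) (toW M M.zero) = 1 := by
      show ((1:W M) - 0) + (0 - 1) = 1
      rw [sub_zero', zero_sub', add_zero']
    rw [hd] at hn
    exact ⟨n, eq_one_of_one_le hn⟩

lemma total (a b : W M) : a ≤ b ∨ b ≤ a := by
  by_cases hc : a - b = 0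
  · exact Or.inl (le_of_sub_eq_zero hc)
  by_cases hd : b - a = 0
  · exact Or.inr (le_of_sub_eq_zero hd)
  exfalso
  obtain ⟨n, hn⟩ := arch hs hc
  obtain ⟨m, hm⟩ := arch hs hd
  have h1 : nsm n (a - b) ≤ nsm (n + m) (a - b) := nsm_le_nsm (Nat.le_add_right n m) _
  have h2 : nsm m (b - a) ≤ nsm (n + m) (b - a) := nsm_le_nsm (Nat.le_add_left m n) _
  rw [hn] at h1; rw [hm] at h2
  have e1 : nsm (n+m) (a-b) = 1 := eq_one_of_one_le h1
  have e2 : nsm (n+m) (b-a) = 1 := eq_one_of_one_le h2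
  have h0 := inf_nsm_nsm_zero (inf_sub_sub a b) (n+m) (n+m)
  rw [e1, e2, inf_idem] at h0
  exact nontriv hs h0.symm

end Simple

/-! ### Chain lemmas (assuming totality) -/

lemma add3c (p q r : W M) : (p + q) + r = q + (r + p) := by abel
lemma mul_eq_zero_iff_le {x y : W M} : x * y = 0 ↔ x ≤ -y := by
  constructor
  · intro h; apply le_of_sub_eq_zero; rwa [sub_def, neg_neg']
  · intro h; have := sub_eq_zero_of_le h; rwa [sub_def, neg_neg'] at this

lemma mul_add_neg' (x y : W M) : (x * y) + -y = sup x (-y) := by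
  show _ = (x - -y) + -y
  rw [sub_def, neg_neg']

/-- G1 : u * (v + w) ≤ (u * v) + w (general) -/
lemma mul_add_le (u v w : W M) : u * (v + w) ≤ (u * v) + w := by
  show -(u * (v+w)) + ((u*v) + w) = 1
  rw [neg_mul]
  apply eq_one_of_one_le
  have e : (-u + -(v+w)) + ((u*v)+w) = ((u*v) + -u) + (-(v+w) + w) := by
    rw [add4a (-u) (-(v+w)) (u*v) w, add_comm' (-u) (u*v)]
  rw [e]
  have h1 : v ≤ (u*v) + -u := by
    rw [mul_comm', mul_add_neg']
    exact le_sup_left v (-u)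
  have h2 : -v ≤ -(v+w) + w := by
    have hh : -(v+w) + w = ((-v) - w) + w := by
      rw [sub_def, ← neg_add]
    rw [hh]
    exact le_sup_left (-v) w
  have := add_le_add' h1 h2
  rwa [add_neg_self'] at this

lemma neg_ne_zero_of_ne_one {x y : W M} (h : x + y ≠ 1) : -x * -y ≠ 0 := by
  rw [neg_mul_neg]
  intro hx
  exact h (by rw [← neg_neg' (x+y), hx, neg_zero'])

lemma neg_eq_zero_of_eq_one {x y : W M} (h : x + y = 1) : -x * -y = 0 := by
  rw [neg_mul_neg, h, neg_one']

section Chain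
variable (tot : ∀ a b : W M, a ≤ b ∨ b ≤ a)
include tot

lemma neg_le_of_mul_ne_zero {u v : W M} (h : u * v ≠ 0) : -v ≤ u := by
  rcases tot u (-v) with h1 | h1
  · exact absurd (mul_eq_zero_iff_le.2 h1) h
  · exact h1

lemma K1' {u v w : W M} (h1 : u * v ≠ 0) (h2 : v * w = 0) :
    (u * v) + w = u * (v + w) := by
  have hvu : -v ≤ u := neg_le_of_mul_ne_zero tot h1
  have huv : -u ≤ v := by
    have := neg_le_neg' hvu; rwa [neg_neg'] at this
  have hwv : w ≤ -v := by
    have : w * v = 0 := by rwa [mul_comm'] at h2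
    exact mul_eq_zero_iff_le.1 this
  have hL : (u*v) + w ≤ u := by
    have h3 : (u*v) + w ≤ (u*v) + -v := add_le_add_left' hwv _
    rwa [mul_add_neg', sup_eq_left hvu] at h3
  have hR : u * (v+w) ≤ u := mul_le_left _ _
  have e1 : -u + ((u*v) + w) = v + w := by
    have hx : -u + (u*v) = v := by
      rw [add_comm', mul_comm', mul_add_neg', sup_eq_left huv]
    rw [← add_assoc', hx]
  have e2 : -u + (u * (v+w)) = v + w := by
    have hle : -u ≤ v + w := le_trans' huv (le_add_right v w)
    rw [add_comm', mul_comm', mul_add_neg', sup_eq_left hle]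
  refine canc (a := -u) (e1.trans e2.symm) ?_ ?_ <;> rw [neg_neg']
  · exact hL
  · exact hR

lemma K2' {u v w : W M} (h1 : u * v ≠ 0) (h2 : v * w ≠ 0) :
    (u * v) + w = u + (v * w) := by
  have hvu : -v ≤ u := neg_le_of_mul_ne_zero tot h1
  have hvw : -v ≤ w := by
    apply neg_le_of_mul_ne_zero tot
    rwa [mul_comm'] at h2
  have du : (u*v) + -v = u := by rw [mul_add_neg', sup_eq_left hvu]
  have dw : (v*w) + -v = w := by rw [mul_comm', mul_add_neg', sup_eq_left hvw]
  calc (u*v) + w = (u*v) + ((v*w) + -v) := by rw [dw]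
    _ = ((u*v) + -v) + (v*w) := by
        rw [add_assoc', add_comm' (v*w) (-v), ← add_assoc']
    _ = u + (v*w) := by rw [du]

lemma K3' {u v w : W M} (h1 : u * v = 0) (h2 : v * w = 0) :
    (u + v) * w = u * (v + w) := by
  have huv : u ≤ -v := mul_eq_zero_iff_le.1 h1
  have hvw : v ≤ -w := mul_eq_zero_iff_le.1 h2
  by_cases hc : (u + v) * w = 0
  · have hle : u + v ≤ -w := mul_eq_zero_iff_le.1 hc
    have e0 : (v + u) - v = u := add_sub_self_of_le huv
    have h3 : u ≤ -w - v := by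
      have hm : (u+v) - v ≤ -w - v := mul_le_mul_right' hle _
      rw [add_comm' u v, e0] at hm
      exact hm
    have h4 : -w - v = -(v + w) := by
      rw [sub_def, neg_mul_neg, add_comm' w v]
    rw [h4] at h3
    have hz : u * (v + w) = 0 := mul_eq_zero_iff_le.2 h3
    rw [hc, hz]
  · have hwc : -w ≤ u + v := by
      rcases tot (u+v) (-w) with h | h
      · exact absurd (mul_eq_zero_iff_le.2 h) hc
      · exact h
    have hq : u * (v + w) ≤ w := by
      have := mul_add_le u v w
      rwa [h1, zero_add'] at this
    have hp : (u+v) * w ≤ w := mul_le_right _ _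
    have e1 : -w + ((u+v) * w) = u + v := by
      rw [add_comm', mul_add_neg', sup_eq_left hwc]
    have hnw : -w = -(v+w) + v := by
      have h5 : (-w - v) + v = -w := sub_add_cancel_of_le hvw
      rw [sub_def, neg_mul_neg, add_comm' w v] at h5
      exact h5.symm
    have h6 : w + (u + v) = 1 := by
      have hh := hwc
      rw [le_def, neg_neg'] at hh
      exact hh
    have hvwu : -(v+w) ≤ u := by
      rw [le_def, neg_neg']
      calc (v + w) + u = w + (u + v) := by abel
        _ = 1 := h6
    have e2 : -w + (u * (v+w)) = u + v := by
      have egq : (u*(v+w)) + -(v+w) = u := by rw [mul_add_neg', sup_eq_left hvwu]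
      rw [hnw]
      calc (-(v+w) + v) + (u*(v+w)) = v + ((u*(v+w)) + -(v+w)) := add3c _ _ _
        _ = v + u := by rw [egq]
        _ = u + v := add_comm' v u
    refine canc (a := -w) (e1.trans e2.symm) ?_ ?_ <;> rw [neg_neg']
    · exact hp
    · exact hq

/-! ### primal versions -/

lemma F1 {x y z : W M} (hxy : x + y = 1) (hyz : y + z = 1) :
    (x * y) + z = x + (y * z) := by
  have h := K3' tot (neg_eq_zero_of_eq_one hxy) (neg_eq_zero_of_eq_one hyz)
  apply neg_inj'
  rw [neg_add (x*y) z, neg_mul x y, neg_add x (y*z), neg_mul y z]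
  exact h

lemma F2 {x y z : W M} (h1 : x + y ≠ 1) (h2 : y + z ≠ 1) :
    (x + y) * z = x * (y + z) := by
  have h := K2' tot (neg_ne_zero_of_ne_one h1) (neg_ne_zero_of_ne_one h2)
  apply neg_inj'
  rw [neg_mul (x+y) z, neg_mul x (y+z), neg_add x y, neg_add y z]
  exact h

lemma F3 {x y z : W M} (h1 : x + y ≠ 1) (h2 : y + z = 1) :
    (x + y) * z = x + (y * z) := by
  have h := K1' tot (neg_ne_zero_of_ne_one h1) (neg_eq_zero_of_eq_one h2)
  apply neg_inj'
  rw [neg_mul (x+y) z, neg_add x (y*z), neg_mul y z, neg_add x y]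
  exact h

lemma F3m {x y z : W M} (h1 : x + y = 1) (h2 : y + z ≠ 1) :
    (x * y) + z = x * (y + z) := by
  have h := F3 tot (show z + y ≠ 1 by rwa [add_comm']) (show y + x = 1 by rwa [add_comm'])
  rw [add_comm' z y, mul_comm' (y+z) x, mul_comm' y x, add_comm' z (x*y)] at h
  exact h.symm

end Chain

/-! ### pairs with carry -/

lemma add_eq_one_left {x y z : W M} (h : y + z = 1) : (x + y) + z = 1 := by
  rw [add_assoc', h, add_one']
lemma add_eq_one_right {x y z : W M} (h : x + y = 1) : x + (y + z) = 1 := by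
  rw [← add_assoc', h, one_add']
lemma add_eq_one_of_mul_right {x y z : W M} (h : x + (y * z) = 1) : x + y = 1 :=
  eq_one_of_one_le (h ▸ add_le_add_left' (mul_le_left y z) x)
lemma add_eq_one_of_mul_left {x y z : W M} (h : (x * y) + z = 1) : y + z = 1 :=
  eq_one_of_one_le (h ▸ add_le_add_right' (mul_le_right x y) z)

open Classical in
noncomputable def pa (p q : ℕ × W M) : ℕ × W M :=
  if p.2 + q.2 = 1 then (p.1 + q.1 + 1, p.2 * q.2) else (p.1 + q.1, p.2 + q.2)

lemma pa_comm (p q : ℕ × W M) : pa p q = pa q p := by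
  unfold pa
  rw [add_comm' p.2 q.2, mul_comm' p.2 q.2, Nat.add_comm p.1 q.1]

lemma pa_pos {p q : ℕ × W M} (h : p.2 + q.2 = 1) : pa p q = (p.1 + q.1 + 1, p.2 * q.2) := by
  unfold pa; rw [if_pos h]
lemma pa_neg {p q : ℕ × W M} (h : ¬(p.2 + q.2 = 1)) : pa p q = (p.1 + q.1, p.2 + q.2) := by
  unfold pa; rw [if_neg h]

lemma pa_fst_ge (p q : ℕ × W M) : p.1 + q.1 ≤ (pa p q).1 := by
  unfold pa; split_ifs <;> simp
lemma pa_fst_le (p q : ℕ × W M) : (pa p q).1 ≤ p.1 + q.1 + 1 := by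
  unfold pa; split_ifs <;> simp

lemma pa_fst_shift (m k : ℕ) (x z : W M) (j : ℕ) :
    pa (m + j, x) (k, z) = ((pa (m, x) (k, z)).1 + j, (pa (m, x) (k, z)).2) := by
  unfold pa
  split_ifs <;> simp <;> omega

section Chain
variable (tot : ∀ a b : W M, a ≤ b ∨ b ≤ a)
include tot

lemma pa_assoc (p q r : ℕ × W M) : pa (pa p q) r = pa p (pa q r) := by
  obtain ⟨m, x⟩ := p
  obtain ⟨n, y⟩ := q
  obtain ⟨k, z⟩ := r
  by_cases c1 : x + y = 1 <;> by_cases d1 : y + z = 1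
  · rw [pa_pos (p := (m,x)) (q := (n,y)) c1, pa_pos (p := (n,y)) (q := (k,z)) d1]
    have F := F1 tot c1 d1
    by_cases c2 : (x * y) + z = 1
    · have d2 : x + (y * z) = 1 := F ▸ c2
      rw [pa_pos (p := (m+n+1, x*y)) (q := (k,z)) c2,
          pa_pos (p := (m,x)) (q := (n+k+1, y*z)) d2]
      refine Prod.ext ?_ ?_
      · show m + n + 1 + k + 1 = m + (n + k + 1) + 1; omega
      · exact mul_assoc' x y z
    · have d2 : ¬(x + (y * z) = 1) := fun h => c2 (F.symm ▸ h)
      rw [pa_neg (p := (m+n+1, x*y)) (q := (k,z)) c2,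
          pa_neg (p := (m,x)) (q := (n+k+1, y*z)) d2]
      refine Prod.ext ?_ ?_
      · show m + n + 1 + k = m + (n + k + 1); omega
      · exact F
  · rw [pa_pos (p := (m,x)) (q := (n,y)) c1, pa_neg (p := (n,y)) (q := (k,z)) d1]
    have c2 : ¬((x * y) + z = 1) := fun h => d1 (add_eq_one_of_mul_left h)
    have d2 : x + (y + z) = 1 := add_eq_one_right c1
    rw [pa_neg (p := (m+n+1, x*y)) (q := (k,z)) c2,
        pa_pos (p := (m,x)) (q := (n+k, y+z)) d2]
    refine Prod.ext ?_ ?_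
    · show m + n + 1 + k = m + (n + k) + 1; omega
    · exact F3m tot c1 d1
  · rw [pa_neg (p := (m,x)) (q := (n,y)) c1, pa_pos (p := (n,y)) (q := (k,z)) d1]
    have c2 : (x + y) + z = 1 := add_eq_one_left d1
    have d2 : ¬(x + (y * z) = 1) := fun h => c1 (add_eq_one_of_mul_right h)
    rw [pa_pos (p := (m+n, x+y)) (q := (k,z)) c2,
        pa_neg (p := (m,x)) (q := (n+k+1, y*z)) d2]
    refine Prod.ext ?_ ?_
    · show m + n + k + 1 = m + (n + k + 1); omega
    · exact F3 tot c1 d1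
  · rw [pa_neg (p := (m,x)) (q := (n,y)) c1, pa_neg (p := (n,y)) (q := (k,z)) d1]
    by_cases c2 : (x + y) + z = 1
    · have d2 : x + (y + z) = 1 := by rw [← add_assoc']; exact c2
      rw [pa_pos (p := (m+n, x+y)) (q := (k,z)) c2,
          pa_pos (p := (m,x)) (q := (n+k, y+z)) d2]
      refine Prod.ext ?_ ?_
      · show m + n + k + 1 = m + (n + k) + 1; omega
      · exact F2 tot c1 d1
    · have d2 : ¬(x + (y + z) = 1) := by rw [← add_assoc']; exact c2
      rw [pa_neg (p := (m+n, x+y)) (q := (k,z)) c2,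
          pa_neg (p := (m,x)) (q := (n+k, y+z)) d2]
      refine Prod.ext ?_ ?_
      · show m + n + k = m + (n + k); omega
      · exact add_assoc' x y z

lemma pa4 (p q r s : ℕ × W M) : pa (pa p q) (pa r s) = pa (pa p r) (pa q s) := by
  rw [pa_assoc tot, ← pa_assoc tot q r s, pa_comm q r, pa_assoc tot, ← pa_assoc tot]

end Chain

/-! ### iterated pa -/

noncomputable def pw (a : W M) : ℕ → ℕ × W M
  | 0 => (0, (0:W M))
  | n+1 => pa (pw a n) (0, a)

section Chain2
variable (ntz : (0 : W M) ≠ 1)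
include ntz

lemma pw_snd_ne_one (a : W M) (n : ℕ) : (pw a n).2 ≠ 1 := by
  induction n with
  | zero => exact ntz
  | succ n ih =>
      show (pa (pw a n) (0, a)).2 ≠ 1
      by_cases hc : (pw a n).2 + a = 1
      · rw [pa_pos hc]
        intro h
        exact ih (mul_eq_one_iff.1 h).1
      · rw [pa_neg hc]
        exact hc

lemma pa_zero_right {p : ℕ × W M} (hp : p.2 ≠ 1) : pa p (0, (0:W M)) = p := by
  have hc : ¬(p.2 + (0, (0:W M)).2 = 1) := by
    show ¬(p.2 + 0 = 1)
    rw [add_zero']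
    exact hp
  rw [pa_neg hc]
  refine Prod.ext ?_ ?_
  · show p.1 + 0 = p.1; omega
  · show p.2 + 0 = p.2; exact add_zero' _

variable (tot : ∀ a b : W M, a ≤ b ∨ b ≤ a)
include tot

lemma pw_add2_dummy : True := trivial

lemma pw_add (a : W M) (m n : ℕ) : pw a (m + n) = pa (pw a m) (pw a n) := by
  induction n with
  | zero =>
      show pw a m = pa (pw a m) (0, (0:W M))
      rw [pa_zero_right ntz (pw_snd_ne_one ntz a m)]
  | succ n ih =>
      show pa (pw a (m + n)) (0, a) = pa (pw a m) (pa (pw a n) (0, a))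
      rw [ih, pa_assoc tot]

/-- counts -/
noncomputable def ct (a : W M) (n : ℕ) : ℕ := (pw a n).1

lemma ct_superadd (a : W M) (m n : ℕ) : ct a m + ct a n ≤ ct a (m + n) := by
  unfold ct
  rw [pw_add ntz tot]
  exact pa_fst_ge _ _
lemma ct_subadd (a : W M) (m n : ℕ) : ct a (m + n) ≤ ct a m + ct a n + 1 := by
  unfold ct
  rw [pw_add ntz tot]
  exact pa_fst_le _ _

omit ntz tot in
lemma ct_le_self (a : W M) (n : ℕ) : ct a n ≤ n := by
  induction n with
  | zero => exact Nat.le_refl 0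
  | succ n ih =>
      unfold ct pw
      calc (pa (pw a n) (0, a)).1 ≤ (pw a n).1 + 0 + 1 := pa_fst_le _ _
        _ ≤ n + 1 := by unfold ct at ih; omega

lemma ct_mul_lb (a : W M) (k n : ℕ) : k * ct a n ≤ ct a (k * n) := by
  induction k with
  | zero => simp [ct, pw]
  | succ k ih =>
      have h1 := ct_superadd ntz tot a (k * n) n
      calc (k+1) * ct a n = k * ct a n + ct a n := by ring
        _ ≤ ct a (k*n) + ct a n := by omega
        _ ≤ ct a (k*n + n) := h1
        _ = ct a ((k+1)*n) := by ring_nf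
lemma ct_mul_ub (a : W M) (k n : ℕ) : ct a (k * n) ≤ k * ct a n + k := by
  induction k with
  | zero => simp [ct, pw]
  | succ k ih =>
      have h1 := ct_subadd ntz tot a (k * n) n
      calc ct a ((k+1)*n) = ct a (k*n + n) := by ring_nf
        _ ≤ ct a (k*n) + ct a n + 1 := h1
        _ ≤ (k * ct a n + k) + ct a n + 1 := by omega
        _ = (k+1) * ct a n + (k+1) := by ring

omit tot in
lemma pw_nsm (a : W M) (n : ℕ) :
    1 ≤ (pw a n).1 ∨ ((pw a n).1 = 0 ∧ (pw a n).2 = nsm n a) := by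
  induction n with
  | zero => exact Or.inr ⟨rfl, rfl⟩
  | succ n ih =>
      rcases ih with h | ⟨h1, h2⟩
      · left
        have h2 := pa_fst_ge (pw a n) ((0:ℕ), a)
        simp at h2
        show 1 ≤ (pa (pw a n) (0,a)).1
        omega
      · by_cases hc : (pw a n).2 + a = 1
        · left
          show 1 ≤ (pa (pw a n) (0,a)).1
          rw [pa_pos hc]
          omega
        · right
          show (pa (pw a n) (0,a)).1 = 0 ∧ (pa (pw a n) (0,a)).2 = nsm (n+1) a
          rw [pa_neg hc]
          exact ⟨by simpa using h1, by rw [nsm_succ, ← h2]⟩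

omit tot in
lemma ct_pos_of_nsm_one {a : W M} {N : ℕ} (hN : nsm N a = 1) : 1 ≤ ct a N := by
  rcases pw_nsm ntz a N with h | ⟨h1, h2⟩
  · exact h
  · exfalso
    exact pw_snd_ne_one ntz a N (h2.trans hN)

omit ntz tot in
lemma pw_one (n : ℕ) : pw (1 : W M) (n+1) = (n+1, (0:W M)) := by
  induction n with
  | zero =>
      show pa (0, (0:W M)) (0, (1:W M)) = (1, (0:W M))
      have hc : (0:W M) + 1 = 1 := add_one' 0
      rw [pa_pos hc]
      show (0+0+1, (0:W M) * 1) = (1, (0:W M))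
      rw [mul_comm', mul_zero']
  | succ n ih =>
      show pa (pw 1 (n+1)) (0, (1:W M)) = (n+2, (0:W M))
      rw [ih]
      have hc : (0:W M) + 1 = 1 := add_one' 0
      rw [pa_pos hc]
      show (n+1+0+1, (0:W M) * 1) = (n+2, (0:W M))
      rw [mul_comm', mul_zero']

omit ntz tot in
lemma ct_one (n : ℕ) : ct (1 : W M) (n+1) = n+1 := by
  unfold ct
  rw [pw_one]

omit tot in
lemma pw_zero_elt (n : ℕ) : pw (0 : W M) n = (0, (0:W M)) := by
  induction n with
  | zero => rfl
  | succ n ih =>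
      show pa (pw 0 n) (0, (0:W M)) = (0, (0:W M))
      rw [pa_zero_right ntz (pw_snd_ne_one ntz 0 n), ih]

lemma pw_neg_add (a : W M) (n : ℕ) : pa (pw a n) (pw (-a) n) = (n, (0:W M)) := by
  induction n with
  | zero =>
      show pa (0, (0:W M)) (0, (0:W M)) = (0, (0:W M))
      rw [pa_zero_right ntz ntz]
  | succ n ih =>
      show pa (pa (pw a n) (0, a)) (pa (pw (-a) n) (0, -a)) = (n+1, (0:W M))
      rw [pa4 tot, ih]
      have hc : a + -a = 1 := add_neg_self' a
      rw [pa_pos (p := (0,a)) (q := (0,-a)) hc]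
      show pa (n, (0:W M)) (0+0+1, a * -a) = (n+1, (0:W M))
      rw [mul_neg_self']
      have hc2 : ¬((0:W M) + 0 = 1) := by rw [add_zero']; exact ntz
      rw [pa_neg hc2]
      show (n + 1 + 0, (0:W M) + 0) = (n+1, (0:W M))
      rw [add_zero']

lemma pw_add_elt {a b : W M} (hab : ¬(a + b = 1)) (n : ℕ) :
    pa (pw a n) (pw b n) = pw (a + b) n := by
  induction n with
  | zero =>
      show pa (0, (0:W M)) (0, (0:W M)) = (0, (0:W M))
      rw [pa_zero_right ntz ntz]
  | succ n ih =>
      show pa (pa (pw a n) (0, a)) (pa (pw b n) (0, b)) = pa (pw (a+b) n) (0, a+b)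
      rw [pa4 tot, ih]
      rw [pa_neg (p := (0,a)) (q := (0,b)) hab]
      rfl

lemma pw_mul_elt {a b : W M} (hab : a + b = 1) (n : ℕ) :
    pa (pw a n) (pw b n) = ((pw (a*b) n).1 + n, (pw (a*b) n).2) := by
  induction n with
  | zero =>
      show pa (0, (0:W M)) (0, (0:W M)) = ((pw (a*b) 0).1 + 0, (pw (a*b) 0).2)
      rw [pa_zero_right ntz ntz]
      rfl
  | succ n ih =>
      show pa (pa (pw a n) (0, a)) (pa (pw b n) (0, b)) = _
      rw [pa4 tot, ih, pa_pos (p := (0,a)) (q := (0,b)) hab]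
      show pa ((pw (a*b) n).1 + n, (pw (a*b) n).2) (0+0+1, a*b) = _
      have e1 : pa ((pw (a*b) n).1 + n, (pw (a*b) n).2) (1, a*b)
          = ((pa ((pw (a*b) n).1, (pw (a*b) n).2) (1, a*b)).1 + n,
             (pa ((pw (a*b) n).1, (pw (a*b) n).2) (1, a*b)).2) := pa_fst_shift _ _ _ _ n
      have e2 : pa ((pw (a*b) n).1, (pw (a*b) n).2) (1, a*b)
          = ((pa ((pw (a*b) n).1, (pw (a*b) n).2) (0, a*b)).1 + 1,
             (pa ((pw (a*b) n).1, (pw (a*b) n).2) (0, a*b)).2) := by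
        unfold pa
        split_ifs <;> simp
      have e3 : pa ((pw (a*b) n).1, (pw (a*b) n).2) (0, a*b) = pw (a*b) (n+1) := by
        show pa ((pw (a*b) n).1, (pw (a*b) n).2) (0, a*b) = pa (pw (a*b) n) (0, a*b)
        rfl
      rw [e1, e2, e3]
      refine Prod.ext ?_ rfl
      show (pw (a*b) (n+1)).1 + 1 + n = (pw (a*b) (n+1)).1 + (n+1)
      omega

end Chain2

/-! ### the real-valued embedding -/

noncomputable def fr (a : W M) : ℝ := sSup {r : ℝ | ∃ n : ℕ, 0 < n ∧ r = (ct a n : ℝ) / n}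

section Real
variable (ntz : (0 : W M) ≠ 1) (tot : ∀ a b : W M, a ≤ b ∨ b ≤ a)
include ntz tot

omit ntz tot in
lemma fr_set_nonempty (a : W M) :
    Set.Nonempty {r : ℝ | ∃ n : ℕ, 0 < n ∧ r = (ct a n : ℝ) / n} :=
  ⟨(ct a 1 : ℝ), 1, Nat.one_pos, by norm_num⟩

omit ntz tot in
lemma fr_set_bdd (a : W M) :
    ∀ r ∈ {r : ℝ | ∃ n : ℕ, 0 < n ∧ r = (ct a n : ℝ) / n}, r ≤ 1 := by
  rintro r ⟨n, hn, rfl⟩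
  rw [div_le_one (by exact_mod_cast hn)]
  exact_mod_cast ct_le_self a n

omit ntz tot in
lemma le_fr (a : W M) {n : ℕ} (hn : 0 < n) : (ct a n : ℝ) / n ≤ fr a :=
  le_csSup ⟨1, fun r hr => fr_set_bdd a r hr⟩ ⟨n, hn, rfl⟩

omit ntz tot in
lemma fr_le_one (a : W M) : fr a ≤ 1 :=
  csSup_le (fr_set_nonempty a) (fr_set_bdd a)

omit ntz tot in
lemma fr_nonneg (a : W M) : 0 ≤ fr a := by
  refine le_trans ?_ (le_fr a Nat.one_pos)
  positivity

lemma fr_le (a : W M) {n : ℕ} (hn : 0 < n) : fr a ≤ (ct a n : ℝ) / n + 1 / n := by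
  apply csSup_le (fr_set_nonempty a)
  rintro r ⟨m, hm, rfl⟩
  have key : m * ct a n + m ≥ n * ct a m := by
    calc n * ct a m ≤ ct a (n * m) := ct_mul_lb ntz tot a n m
      _ = ct a (m * n) := by rw [Nat.mul_comm]
      _ ≤ m * ct a n + m := ct_mul_ub ntz tot a m n
  rw [← add_div, div_le_div_iff₀ (by exact_mod_cast hm) (by exact_mod_cast hn)]
  have : (n : ℝ) * ct a m ≤ m * ct a n + m := by exact_mod_cast key
  nlinarith [this]

lemma fr_bounds (a : W M) {n : ℕ} (hn : 0 < n) :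
    (ct a n : ℝ) / n ≤ fr a ∧ fr a ≤ (ct a n : ℝ) / n + 1 / n :=
  ⟨le_fr a hn, fr_le ntz tot a hn⟩

omit ntz tot in
lemma eq_of_abs_le_div {X : ℝ} (K : ℝ) (h : ∀ n : ℕ, 0 < n → |X| ≤ K / n) : X = 0 := by
  by_contra hX
  have hpos : 0 < |X| := abs_pos.2 hX
  obtain ⟨n, hn⟩ := exists_nat_gt (max 0 (K / |X|))
  have hn0 : 0 < n := by
    rcases Nat.eq_zero_or_pos n with rfl | h
    · exfalso
      have hmx : (0:ℝ) ≤ max 0 (K / |X|) := le_max_left _ _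
      rw [Nat.cast_zero] at hn
      linarith
    · exact h
  have h1 := h n hn0
  have h2 : K / |X| < n := lt_of_le_of_lt (le_max_right _ _) hn
  have h3 : K < n * |X| := by
    rwa [div_lt_iff₀ hpos] at h2
  have h4 : K / n < |X| := by
    rw [div_lt_iff₀ (by exact_mod_cast hn0)]
    nlinarith
  linarith

omit tot in
lemma ct_zero_elt (n : ℕ) : ct (0 : W M) n = 0 := by
  unfold ct
  rw [pw_zero_elt ntz]

omit tot in
lemma fr_zero : fr (0 : W M) = 0 := by
  apply le_antisymm
  · apply csSup_le (fr_set_nonempty 0)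
    rintro r ⟨n, hn, rfl⟩
    rw [ct_zero_elt ntz]
    simp
  · exact fr_nonneg 0

omit ntz tot in
lemma fr_one : fr (1 : W M) = 1 := by
  apply le_antisymm (fr_le_one 1)
  have := le_fr (1 : W M) Nat.one_pos
  rwa [ct_one, Nat.cast_one, div_one] at this

lemma fr_neg (a : W M) : fr (-a) = 1 - fr a := by
  have key : fr (-a) - (1 - fr a) = 0 := by
    apply eq_of_abs_le_div 3
    intro n hn
    have hp := pw_neg_add ntz tot a n
    have g1 : ct a n + ct (-a) n ≤ n := by
      have := pa_fst_ge (pw a n) (pw (-a) n)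
      rw [hp] at this
      exact this
    have g2 : n ≤ ct a n + ct (-a) n + 1 := by
      have := pa_fst_le (pw a n) (pw (-a) n)
      rw [hp] at this
      exact this
    have hnR : (0 : ℝ) < n := by exact_mod_cast hn
    have r1 : ((ct a n : ℝ) + ct (-a) n) / n ≤ 1 := by
      rw [div_le_one hnR]
      exact_mod_cast g1
    have r2 : (1 : ℝ) ≤ ((ct a n : ℝ) + ct (-a) n) / n + 1 / n := by
      rw [← add_div, le_div_iff₀ hnR, one_mul]
      exact_mod_cast g2
    obtain ⟨b1, b2⟩ := fr_bounds ntz tot a hn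
    obtain ⟨c1, c2⟩ := fr_bounds ntz tot (-a) hn
    rw [add_div] at r1 r2
    rw [abs_le]
    constructor
    · have h3n : (3:ℝ)/n = 1/n + 1/n + 1/n := by ring
      rw [h3n]
      linarith
    · have h3n : (3:ℝ)/n = 1/n + 1/n + 1/n := by ring
      rw [h3n]
      linarith
  linarith

lemma fr_add_of_ne {a b : W M} (hab : ¬(a + b = 1)) : fr (a + b) = fr a + fr b := by
  have key : fr (a+b) - (fr a + fr b) = 0 := by
    apply eq_of_abs_le_div 4
    intro n hn
    have hp := pw_add_elt ntz tot hab n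
    have g1 : ct a n + ct b n ≤ ct (a+b) n := by
      have := pa_fst_ge (pw a n) (pw b n)
      rw [hp] at this
      exact this
    have g2 : ct (a+b) n ≤ ct a n + ct b n + 1 := by
      have := pa_fst_le (pw a n) (pw b n)
      rw [hp] at this
      exact this
    have hnR : (0 : ℝ) < n := by exact_mod_cast hn
    have r1 : ((ct a n : ℝ) + ct b n) / n ≤ (ct (a+b) n : ℝ) / n :=
      (div_le_div_iff_of_pos_right hnR).2 (by exact_mod_cast g1)
    have r2 : (ct (a+b) n : ℝ) / n ≤ ((ct a n : ℝ) + ct b n) / n + 1 / n := by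
      rw [← add_div]
      exact (div_le_div_iff_of_pos_right hnR).2 (by exact_mod_cast g2)
    obtain ⟨b1, b2⟩ := fr_bounds ntz tot a hn
    obtain ⟨c1, c2⟩ := fr_bounds ntz tot b hn
    obtain ⟨d1, d2⟩ := fr_bounds ntz tot (a+b) hn
    rw [add_div] at r1 r2
    have h4n : (4:ℝ)/n = 1/n + 1/n + 1/n + 1/n := by ring
    rw [abs_le, h4n]
    constructor <;> linarith
  linarith

lemma fr_add_of_eq {a b : W M} (hab : a + b = 1) : fr a + fr b = 1 + fr (a * b) := by
  have key : (fr a + fr b) - (1 + fr (a*b)) = 0 := by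
    apply eq_of_abs_le_div 4
    intro n hn
    have hp := pw_mul_elt ntz tot hab n
    have g1 : ct a n + ct b n ≤ ct (a*b) n + n := by
      have := pa_fst_ge (pw a n) (pw b n)
      rw [hp] at this
      exact this
    have g2 : ct (a*b) n + n ≤ ct a n + ct b n + 1 := by
      have := pa_fst_le (pw a n) (pw b n)
      rw [hp] at this
      exact this
    have hnR : (0 : ℝ) < n := by exact_mod_cast hn
    have r1 : ((ct a n : ℝ) + ct b n) / n ≤ ((ct (a*b) n : ℝ) + n) / n :=
      (div_le_div_iff_of_pos_right hnR).2 (by exact_mod_cast g1)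
    have r2 : ((ct (a*b) n : ℝ) + n) / n ≤ ((ct a n : ℝ) + ct b n) / n + 1 / n := by
      rw [← add_div]
      exact (div_le_div_iff_of_pos_right hnR).2 (by exact_mod_cast g2)
    have eab : ((ct (a*b) n : ℝ) + n) / n = (ct (a*b) n : ℝ)/n + 1 := by
      rw [add_div, div_self (ne_of_gt hnR)]
    rw [eab] at r1 r2
    rw [add_div] at r1 r2
    obtain ⟨b1, b2⟩ := fr_bounds ntz tot a hn
    obtain ⟨c1, c2⟩ := fr_bounds ntz tot b hn
    obtain ⟨d1, d2⟩ := fr_bounds ntz tot (a*b) hn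
    have h4n : (4:ℝ)/n = 1/n + 1/n + 1/n + 1/n := by ring
    rw [abs_le, h4n]
    constructor <;> linarith
  linarith

lemma fr_pos (harch : ∀ x : W M, x ≠ 0 → ∃ n, nsm n x = 1) {a : W M} (ha : a ≠ 0) :
    0 < fr a := by
  obtain ⟨N, hN⟩ := harch a ha
  have hN0 : 0 < N := by
    rcases Nat.eq_zero_or_pos N with h | h
    · exfalso
      rw [h] at hN
      exact ntz hN
    · exact h
  have hc := ct_pos_of_nsm_one ntz hN
  have : (1:ℝ)/N ≤ (ct a N : ℝ)/N := by
    apply (div_le_div_iff_of_pos_right (by exact_mod_cast hN0)).2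
    exact_mod_cast hc
  have h2 := le_fr a hN0
  have h3 : (0:ℝ) < 1/N := by positivity
  linarith

lemma fr_lt (harch : ∀ x : W M, x ≠ 0 → ∃ n, nsm n x = 1)
    {a b : W M} (hle : b ≤ a) (hne : a ≠ b) : fr b < fr a := by
  set c := a - b with hc
  have hcne : c ≠ 0 := by
    intro h
    exact hne (le_antisymm' (le_of_sub_eq_zero h) hle)
  have ha : a = b + c := by
    rw [hc, add_comm']
    exact (sub_add_cancel_of_le hle).symm
  by_cases hbc : b + c = 1
  · have ha1 : a = 1 := by rw [ha, hbc]
    rw [ha1, fr_one]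
    have hb1 : b ≠ 1 := by
      intro h
      exact hne (ha1.trans h.symm)
    have hnb : -b ≠ 0 := by
      intro h
      apply hb1
      rw [← neg_neg' b, h, neg_zero']
    have hpos := fr_pos ntz tot harch hnb
    have := fr_neg ntz tot b
    linarith
  · have := fr_add_of_ne ntz tot hbc
    rw [← ha] at this
    have hpos := fr_pos ntz tot harch hcne
    rw [this]
    linarith

end Real
end MVW

/-- Every simple MV-algebra is isomorphic to a subalgebra of the MV-algebra [0,1]. -/
theorem simple_embeds_in_unit_interval {A : Type u} (M : MVAlgebra A) (h : IsSimpleMV M) :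
    ∃ f : A → Set.Icc (0 : ℝ) 1, Function.Injective f ∧
      ((f M.zero : ℝ) = 0) ∧
      (∀ x, (f (M.neg x) : ℝ) = 1 - (f x : ℝ)) ∧
      (∀ x y, (f (M.oplus x y) : ℝ) = min 1 ((f x : ℝ) + (f y : ℝ))) := by
  classical
  have ntz : (0 : MVW.W M) ≠ 1 := MVW.nontriv h
  have tot : ∀ a b : MVW.W M, a ≤ b ∨ b ≤ a := MVW.total h
  have harch : ∀ x : MVW.W M, x ≠ 0 → ∃ n, MVW.nsm n x = 1 := fun x hx => MVW.arch h hx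
  refine ⟨fun x => ⟨MVW.fr (MVW.toW M x), MVW.fr_nonneg _, MVW.fr_le_one _⟩, ?_, ?_, ?_, ?_⟩
  · intro x y hxy
    have he : MVW.fr (MVW.toW M x) = MVW.fr (MVW.toW M y) := congrArg Subtype.val hxy
    by_contra hne
    rcases tot (MVW.toW M x) (MVW.toW M y) with hle | hle
    · have hne' : MVW.toW M y ≠ MVW.toW M x := fun hh => hne (show x = y from hh.symm)
      exact absurd he (ne_of_lt (MVW.fr_lt ntz tot harch hle hne'))
    · have hne' : MVW.toW M x ≠ MVW.toW M y := fun hh => hne (show x = y from hh)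
      exact absurd he.symm (ne_of_lt (MVW.fr_lt ntz tot harch hle hne'))
  · show MVW.fr (MVW.toW M M.zero) = 0
    exact MVW.fr_zero ntz
  · intro x
    show MVW.fr (MVW.toW M (M.neg x)) = 1 - MVW.fr (MVW.toW M x)
    exact MVW.fr_neg ntz tot (MVW.toW M x)
  · intro x y
    show MVW.fr (MVW.toW M (M.oplus x y))
        = min 1 (MVW.fr (MVW.toW M x) + MVW.fr (MVW.toW M y))
    by_cases hab : MVW.toW M x + MVW.toW M y = 1
    · have h1 := MVW.fr_add_of_eq ntz tot hab
      have h2 : MVW.fr (MVW.toW M (M.oplus x y)) = 1 := by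
        show MVW.fr (MVW.toW M x + MVW.toW M y) = 1
        rw [hab]
        exact MVW.fr_one
      rw [h2, min_eq_left ?_]
      have h3 := MVW.fr_nonneg (MVW.toW M x * MVW.toW M y)
      linarith
    · have h1 := MVW.fr_add_of_ne ntz tot hab
      have h2 : MVW.fr (MVW.toW M (M.oplus x y))
          = MVW.fr (MVW.toW M x) + MVW.fr (MVW.toW M y) := h1
      rw [h2, min_eq_right ?_]
      rw [← h2]
      exact MVW.fr_le_one _
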